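/- For functions u(x) = α(1+β|x|)e^{-β|x|} with β > 0 and α ∈ C nonzero on R^N, equality holds: (∫_{R^N} |Δu|^2 dx)(∫_{R^N} |∇u|^2 dx) = ((N+1)^2/4)(∫_{R^N} |∇u|^2/|x| dx)^2. -/

import Mathlib

open MeasureTheory

/-- `i`-th partial derivative of a complex-valued function on `ℝ^N`. -/
noncomputable def pd {N : ℕ} (u : EuclideanSpace ℝ (Fin N) → ℂ) (i : Fin N) :
    EuclideanSpace ℝ (Fin N) → ℂ :=
  fun x => fderiv ℝ u x (EuclideanSpace.single i 1)

/-- Laplacian of a complex-valued function on `ℝ^N`. -/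
noncomputable def lap {N : ℕ} (u : EuclideanSpace ℝ (Fin N) → ℂ) :
    EuclideanSpace ℝ (Fin N) → ℂ :=
  fun x => ∑ i, pd (pd u i) i x

/-- Squared Euclidean norm of the gradient of `u`. -/
noncomputable def gradNormSq {N : ℕ} (u : EuclideanSpace ℝ (Fin N) → ℂ) :
    EuclideanSpace ℝ (Fin N) → ℝ :=
  fun x => ∑ i, ‖pd u i x‖ ^ 2

section Aux

open Set

noncomputable def cfun (α : ℂ) (β : ℝ) : ℝ → ℂ :=
  fun r => α * (1 + (β : ℂ) * (r : ℂ)) * Complex.exp (-(β : ℂ) * (r : ℂ))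

lemma hasDerivAt_cfun (α : ℂ) (β r : ℝ) :
    HasDerivAt (cfun α β) (-α * (β:ℂ)^2 * (r:ℂ) * Complex.exp (-(β : ℂ) * (r : ℂ))) r := by
  have h0 : HasDerivAt (fun r : ℝ => ((r : ℝ) : ℂ)) 1 r := by
    simpa using (hasDerivAt_id r).ofReal_comp
  have h1 : HasDerivAt (fun r : ℝ => -(β:ℂ) * (r:ℂ)) (-(β:ℂ)) r := by
    simpa using h0.const_mul (-(β:ℂ))
  have h2 := h1.cexp
  have h3 : HasDerivAt (fun r : ℝ => α * (1 + (β:ℂ) * (r:ℂ))) (α * (β:ℂ)) r := by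
    simpa [mul_add] using ((h0.const_mul (β:ℂ)).const_add 1).const_mul α
  have h4 := h3.mul h2
  refine h4.congr_deriv ?_
  ring

lemma hasFDerivAt_norm' {E : Type*} [NormedAddCommGroup E] [InnerProductSpace ℝ E]
    {x : E} (hx : x ≠ 0) :
    HasFDerivAt (fun y : E => ‖y‖) (‖x‖⁻¹ • innerSL ℝ x) x := by
  have h1 := (hasStrictFDerivAt_norm_sq x).hasFDerivAt
  have hs : (‖x‖:ℝ)^2 ≠ 0 := pow_ne_zero _ (norm_ne_zero_iff.mpr hx)
  have h2 := (Real.hasDerivAt_sqrt hs).comp_hasFDerivAt x h1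
  have hfun : (Real.sqrt ∘ fun y : E => ‖y‖^2) = fun y : E => ‖y‖ := by
    funext y; simp [Function.comp, Real.sqrt_sq (norm_nonneg y)]
  rw [hfun] at h2
  refine h2.congr_fderiv ?_
  rw [Real.sqrt_sq (norm_nonneg x)]
  ext v
  simp [smul_smul]
  ring

variable {N : ℕ}

lemma hasFDerivAt_u (α : ℂ) (β : ℝ) {x : EuclideanSpace ℝ (Fin N)} (hx : x ≠ 0) :
    HasFDerivAt (fun y : EuclideanSpace ℝ (Fin N) => cfun α β ‖y‖)
      ((ContinuousLinearMap.smulRight (1 : ℝ →L[ℝ] ℝ)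
          (-α * (β:ℂ)^2 * (‖x‖:ℂ) * Complex.exp (-(β : ℂ) * (‖x‖ : ℂ)))).comp
        (‖x‖⁻¹ • innerSL ℝ x)) x :=
  (hasDerivAt_cfun α β ‖x‖).hasFDerivAt.comp x (hasFDerivAt_norm' hx)

lemma pd_u_eq (α : ℂ) (β : ℝ) {u : EuclideanSpace ℝ (Fin N) → ℂ}
    (hu : u = fun y => cfun α β ‖y‖) (i : Fin N)
    {x : EuclideanSpace ℝ (Fin N)} (hx : x ≠ 0) :
    pd u i x = -α * (β:ℂ)^2 * Complex.exp (-(β : ℂ) * (‖x‖ : ℂ)) * ((x i : ℝ) : ℂ) := by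
  have H := hasFDerivAt_u (N := N) α β hx
  rw [pd, hu, H.fderiv]
  have hnorm : (‖x‖ : ℝ) ≠ 0 := norm_ne_zero_iff.mpr hx
  have hinner : (innerSL ℝ x) (EuclideanSpace.single i 1) = x i := by
    simp [EuclideanSpace.inner_single_right]
  simp only [ContinuousLinearMap.comp_apply, ContinuousLinearMap.smul_apply, hinner,
    ContinuousLinearMap.smulRight_apply, ContinuousLinearMap.one_apply, smul_eq_mul,
    Complex.real_smul]
  have hC : ((‖x‖:ℝ):ℂ) ≠ 0 := Complex.ofReal_ne_zero.mpr hnorm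
  push_cast
  field_simp

noncomputable def c2fun (α : ℂ) (β : ℝ) : ℝ → ℂ :=
  fun r => -α * (β:ℂ)^2 * Complex.exp (-(β : ℂ) * (r : ℂ))

lemma hasDerivAt_c2fun (α : ℂ) (β r : ℝ) :
    HasDerivAt (c2fun α β) (α * (β:ℂ)^3 * Complex.exp (-(β : ℂ) * (r : ℂ))) r := by
  have h0 : HasDerivAt (fun r : ℝ => ((r : ℝ) : ℂ)) 1 r := by
    simpa using (hasDerivAt_id r).ofReal_comp
  have h1 : HasDerivAt (fun r : ℝ => -(β:ℂ) * (r:ℂ)) (-(β:ℂ)) r := by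
    simpa using h0.const_mul (-(β:ℂ))
  have h2 := (h1.cexp).const_mul (-α * (β:ℂ)^2)
  refine h2.congr_deriv ?_
  ring

lemma lap_term_eq (α : ℂ) (β : ℝ) {u : EuclideanSpace ℝ (Fin N) → ℂ}
    (hu : u = fun y => cfun α β ‖y‖) (j : Fin N)
    {x : EuclideanSpace ℝ (Fin N)} (hx : x ≠ 0) :
    pd (pd u j) j x =
      -α * (β:ℂ)^2 * Complex.exp (-(β : ℂ) * (‖x‖ : ℂ))
        + α * (β:ℂ)^3 * Complex.exp (-(β : ℂ) * (‖x‖ : ℂ)) * ((x j : ℝ) : ℂ)^2 * (‖x‖:ℂ)⁻¹ := by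
  have hnorm : (‖x‖ : ℝ) ≠ 0 := norm_ne_zero_iff.mpr hx
  have hC : ((‖x‖:ℝ):ℂ) ≠ 0 := Complex.ofReal_ne_zero.mpr hnorm
  set Lj : EuclideanSpace ℝ (Fin N) →L[ℝ] ℂ :=
    Complex.ofRealCLM.comp (EuclideanSpace.proj j) with hLj
  have hgj : pd u j =ᶠ[nhds x]
      (fun y => c2fun α β ‖y‖ * ((y j : ℝ) : ℂ)) := by
    filter_upwards [eventually_ne_nhds hx] with y hy
    rw [pd_u_eq α β hu j hy]
    simp [c2fun]
  have hA : HasFDerivAt (fun y : EuclideanSpace ℝ (Fin N) => c2fun α β ‖y‖)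
      ((ContinuousLinearMap.smulRight (1 : ℝ →L[ℝ] ℝ)
          (α * (β:ℂ)^3 * Complex.exp (-(β : ℂ) * (‖x‖ : ℂ)))).comp
        (‖x‖⁻¹ • innerSL ℝ x)) x :=
    (hasDerivAt_c2fun α β ‖x‖).hasFDerivAt.comp x (hasFDerivAt_norm' hx)
  have hB : HasFDerivAt (fun y : EuclideanSpace ℝ (Fin N) => ((y j : ℝ) : ℂ)) Lj x :=
    Lj.hasFDerivAt
  have hmul : HasFDerivAt (fun y : EuclideanSpace ℝ (Fin N) => c2fun α β ‖y‖ * ((y j : ℝ) : ℂ)) _ x := hA.mul hB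
  have hD : fderiv ℝ (pd u j) x = fderiv ℝ (fun y => c2fun α β ‖y‖ * ((y j : ℝ) : ℂ)) x :=
    hgj.fderiv_eq
  rw [pd, hD, hmul.fderiv]
  have hinner : (innerSL ℝ x) (EuclideanSpace.single j 1) = x j := by
    simp [EuclideanSpace.inner_single_right]
  have hLjev : Lj (EuclideanSpace.single j 1) = 1 := by
    simp [hLj, EuclideanSpace.single_apply]
  simp only [ContinuousLinearMap.add_apply, ContinuousLinearMap.smul_apply,
    ContinuousLinearMap.comp_apply, ContinuousLinearMap.smulRight_apply,
    ContinuousLinearMap.one_apply, hinner, hLjev, smul_eq_mul, Complex.real_smul,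
    c2fun]
  push_cast
  field_simp

lemma cexp_eq (β r : ℝ) :
    Complex.exp (-(β:ℂ)*(r:ℂ)) = ((Real.exp (-(β*r)) : ℝ) : ℂ) := by
  rw [Complex.ofReal_exp]; push_cast; ring_nf

lemma sum_sq_eq (x : EuclideanSpace ℝ (Fin N)) : ∑ j, (x j)^2 = ‖x‖^2 := by
  rw [EuclideanSpace.norm_eq, Real.sq_sqrt (by positivity)]
  simp [sq_abs]

lemma lap_u_eq (α : ℂ) (β : ℝ) {u : EuclideanSpace ℝ (Fin N) → ℂ}
    (hu : u = fun y => cfun α β ‖y‖)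
    {x : EuclideanSpace ℝ (Fin N)} (hx : x ≠ 0) :
    lap u x = α * (β:ℂ)^2 * ((β * ‖x‖ - N : ℝ) : ℂ) *
      ((Real.exp (-(β*‖x‖)) : ℝ) : ℂ) := by
  have hnorm : (‖x‖ : ℝ) ≠ 0 := norm_ne_zero_iff.mpr hx
  have hC : ((‖x‖:ℝ):ℂ) ≠ 0 := Complex.ofReal_ne_zero.mpr hnorm
  rw [lap, Finset.sum_congr rfl fun j _ => lap_term_eq α β hu j hx]
  rw [Finset.sum_add_distrib, Finset.sum_const, Finset.card_univ, Fintype.card_fin]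
  have hsum2 : ∑ j, α * (β:ℂ)^3 * Complex.exp (-(β : ℂ) * (‖x‖ : ℂ)) * ((x j : ℝ) : ℂ)^2 * (‖x‖:ℂ)⁻¹
      = α * (β:ℂ)^3 * Complex.exp (-(β : ℂ) * (‖x‖ : ℂ)) * ((‖x‖:ℝ):ℂ)^2 * (‖x‖:ℂ)⁻¹ := by
    rw [← Finset.sum_mul, ← Finset.mul_sum]
    congr 2
    have : ∑ j, ((x j : ℝ) : ℂ)^2 = (((∑ j, (x j)^2 : ℝ)) : ℂ) := by push_cast; ring
    rw [this, sum_sq_eq]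
    push_cast; ring
  rw [hsum2, cexp_eq]
  push_cast
  field_simp
  ring

lemma norm_lap_sq (α : ℂ) (β : ℝ) {u : EuclideanSpace ℝ (Fin N) → ℂ}
    (hu : u = fun y => cfun α β ‖y‖)
    {x : EuclideanSpace ℝ (Fin N)} (hx : x ≠ 0) :
    ‖lap u x‖^2 = (‖α‖ * β^2 * Real.exp (-(β*‖x‖)))^2 * (β * ‖x‖ - N)^2 := by
  rw [lap_u_eq α β hu hx]
  simp only [norm_mul, Complex.norm_real, Real.norm_eq_abs, Complex.norm_natCast,
    norm_pow, Complex.norm_ofNat]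
  rw [Real.abs_exp]
  simp only [mul_pow, sq_abs]
  ring

lemma gradNormSq_u_eq (α : ℂ) (β : ℝ) {u : EuclideanSpace ℝ (Fin N) → ℂ}
    (hu : u = fun y => cfun α β ‖y‖)
    {x : EuclideanSpace ℝ (Fin N)} (hx : x ≠ 0) :
    gradNormSq u x = (‖α‖ * β^2 * Real.exp (-(β*‖x‖)))^2 * ‖x‖^2 := by
  rw [gradNormSq]
  rw [Finset.sum_congr rfl fun j _ => by rw [pd_u_eq α β hu j hx]]
  have : ∀ j : Fin N, ‖-α * (β:ℂ)^2 * Complex.exp (-(β:ℂ)*(‖x‖:ℂ)) * ((x j : ℝ):ℂ)‖^2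
      = (‖α‖ * β^2 * Real.exp (-(β*‖x‖)))^2 * (x j)^2 := by
    intro j
    rw [cexp_eq]
    simp only [norm_mul, norm_neg, Complex.norm_real, Real.norm_eq_abs, norm_pow]
    rw [Real.abs_exp]
    simp only [mul_pow, sq_abs]
  rw [Finset.sum_congr rfl fun j _ => this j, ← Finset.mul_sum, sum_sq_eq]

lemma Jint (k : ℕ) {b : ℝ} (hb : 0 < b) :
    IntegrableOn (fun t : ℝ => t ^ k * Real.exp (-(b*t))) (Set.Ioi 0) := by
  have hb2 : 0 < b/2 := half_pos hb
  refine integrable_of_isBigO_exp_neg hb2 (Continuous.continuousOn (by continuity)) ?_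
  have h1 : Filter.Tendsto (fun x : ℝ => x^k * Real.exp (-(b/2*x))) Filter.atTop (nhds 0) := by
    have h2 := Real.tendsto_pow_mul_exp_neg_atTop_nhds_zero k
    have h3 : Filter.Tendsto (fun x : ℝ => b/2*x) Filter.atTop Filter.atTop :=
      Filter.Tendsto.const_mul_atTop hb2 Filter.tendsto_id
    have h4 := h2.comp h3
    have h5 := h4.const_mul ((2/b)^k)
    rw [mul_zero] at h5
    refine Filter.Tendsto.congr (fun x => ?_) h5
    simp only [Function.comp]
    rw [← mul_assoc, ← mul_pow]
    congr 2
    field_simp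
  have h6 : (fun x : ℝ => x^k * Real.exp (-(b*x))) =o[Filter.atTop]
      fun x : ℝ => Real.exp (-(b/2) * x) := by
    refine Asymptotics.isLittleO_of_tendsto (fun x hx => absurd hx (Real.exp_ne_zero _)) ?_
    refine Filter.Tendsto.congr (fun x => ?_) h1
    rw [mul_div_assoc, ← Real.exp_sub]
    congr 2
    ring
  exact h6.isBigO

lemma Jval (k : ℕ) {b : ℝ} (hb : 0 < b) :
    ∫ t in Set.Ioi (0:ℝ), t ^ k * Real.exp (-(b*t)) = (1/b)^(k+1) * k.factorial := by
  have h := Real.integral_rpow_mul_exp_neg_mul_Ioi (a := (k:ℝ)+1) (by positivity) hb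
  have heq : ∀ t ∈ Set.Ioi (0:ℝ),
      t ^ (((k:ℝ)+1)-1) * Real.exp (-(b*t)) = t^k * Real.exp (-(b*t)) := by
    intro t ht
    rw [add_sub_cancel_right, Real.rpow_natCast]
  rw [setIntegral_congr_fun measurableSet_Ioi heq] at h
  rw [h, show ((k:ℝ)+1) = ((k+1:ℕ):ℝ) by push_cast; ring, Real.rpow_natCast]
  rw [show ((k+1:ℕ):ℝ) = (k:ℝ)+1 by push_cast; ring, Real.Gamma_nat_eq_factorial]

lemma exp_sq (a : ℝ) : (Real.exp a)^2 = Real.exp (2*a) := by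
  rw [sq, ← Real.exp_add]; ring_nf

lemma int2 (M : ℕ) (Kv : ℝ) {β : ℝ} (hβ : 0 < β) :
    ∫ y in Set.Ioi (0:ℝ), y^M * ((Kv * Real.exp (-(β*y)))^2 * y^2) =
      Kv^2 * ((1/(2*β))^(M+3) * (M+2).factorial) := by
  have h2β : 0 < 2*β := by linarith
  have hcong : ∀ y : ℝ, y^M * ((Kv * Real.exp (-(β*y)))^2 * y^2)
      = Kv^2 * (y^(M+2) * Real.exp (-(2*β*y))) := by
    intro y
    rw [mul_pow, exp_sq]
    ring_nf
  simp_rw [hcong]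
  rw [integral_const_mul, Jval (M+2) h2β]

lemma int3 (M : ℕ) (Kv : ℝ) {β : ℝ} (hβ : 0 < β) :
    ∫ y in Set.Ioi (0:ℝ), y^M * ((Kv * Real.exp (-(β*y)))^2 * y) =
      Kv^2 * ((1/(2*β))^(M+2) * (M+1).factorial) := by
  have h2β : 0 < 2*β := by linarith
  have hcong : ∀ y : ℝ, y^M * ((Kv * Real.exp (-(β*y)))^2 * y)
      = Kv^2 * (y^(M+1) * Real.exp (-(2*β*y))) := by
    intro y
    rw [mul_pow, exp_sq]
    ring_nf
  simp_rw [hcong]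
  rw [integral_const_mul, Jval (M+1) h2β]

lemma int1 (M : ℕ) (Kv : ℝ) {β : ℝ} (hβ : 0 < β) :
    ∫ y in Set.Ioi (0:ℝ), y^M * ((Kv * Real.exp (-(β*y)))^2 * (β*y - ((M:ℝ)+1))^2) =
      Kv^2*β^2 * ((1/(2*β))^(M+3) * (M+2).factorial)
        - Kv^2*(2*β*((M:ℝ)+1)) * ((1/(2*β))^(M+2) * (M+1).factorial)
        + Kv^2*((M:ℝ)+1)^2 * ((1/(2*β))^(M+1) * M.factorial) := by
  have h2β : 0 < 2*β := by linarith
  have hcong : ∀ y : ℝ, y^M * ((Kv * Real.exp (-(β*y)))^2 * (β*y - ((M:ℝ)+1))^2)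
      = Kv^2*β^2 * (y^(M+2) * Real.exp (-(2*β*y)))
        - Kv^2*(2*β*((M:ℝ)+1)) * (y^(M+1) * Real.exp (-(2*β*y)))
        + Kv^2*((M:ℝ)+1)^2 * (y^M * Real.exp (-(2*β*y))) := by
    intro y
    rw [mul_pow, exp_sq]
    ring_nf
  simp_rw [hcong]
  have iA := (Jint (M+2) h2β).const_mul (Kv^2*β^2)
  have iB := (Jint (M+1) h2β).const_mul (Kv^2*(2*β*((M:ℝ)+1)))
  have iC := (Jint M h2β).const_mul (Kv^2*((M:ℝ)+1)^2)
  have iAB : Integrable (fun y : ℝ => Kv^2*β^2 * (y^(M+2) * Real.exp (-(2*β*y)))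
      - Kv^2*(2*β*((M:ℝ)+1)) * (y^(M+1) * Real.exp (-(2*β*y)))) (volume.restrict (Ioi 0)) :=
    iA.sub iB
  rw [integral_add iAB iC, integral_sub iA iB,
    integral_const_mul, integral_const_mul, integral_const_mul,
    Jval (M+2) h2β, Jval (M+1) h2β, Jval M h2β]

lemma radial {M : ℕ} (g : EuclideanSpace ℝ (Fin (M+1)) → ℝ) (F : ℝ → ℝ)
    (hg : ∀ x : EuclideanSpace ℝ (Fin (M+1)), x ≠ 0 → g x = F ‖x‖) :
    ∫ x, g x = (((M:ℝ)+1) * (volume (Metric.ball (0:EuclideanSpace ℝ (Fin (M+1))) 1)).toReal) *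
      ∫ y in Set.Ioi (0:ℝ), y^M * F y := by
  have hae : ∀ᵐ x : EuclideanSpace ℝ (Fin (M+1)) ∂volume, x ≠ 0 := by
    refine (ae_iff).mpr ?_
    simpa [not_not] using measure_singleton (0 : EuclideanSpace ℝ (Fin (M+1)))
  rw [integral_congr_ae (g := fun x => F ‖x‖) (hae.mono fun x hx => hg x hx)]
  have h := integral_fun_norm_addHaar (volume : Measure (EuclideanSpace ℝ (Fin (M+1)))) F
  rw [h]
  simp only [finrank_euclideanSpace_fin, Nat.add_sub_cancel, nsmul_eq_mul, smul_eq_mul]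
  push_cast
  rw [measureReal_def]
  ring

end Aux

theorem second_order_HyUP_equality {N : ℕ} (hN : 1 ≤ N)
    (α : ℂ) (hα : α ≠ 0) (β : ℝ) (hβ : 0 < β)
    (u : EuclideanSpace ℝ (Fin N) → ℂ)
    (hu : u = fun x => α * (1 + (β : ℂ) * (‖x‖ : ℂ)) * Complex.exp (-(β : ℂ) * (‖x‖ : ℂ))) :
    (∫ x, ‖lap u x‖ ^ 2) * (∫ x, gradNormSq u x) =
      ((N : ℝ) + 1) ^ 2 / 4 * (∫ x, gradNormSq u x / ‖x‖) ^ 2 := by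
  obtain ⟨M, rfl⟩ : ∃ M, N = M + 1 := ⟨N - 1, (Nat.succ_pred_eq_of_pos hN).symm⟩
  have hu' : u = fun y => cfun α β ‖y‖ := hu
  set K : ℝ := ‖α‖ * β^2 with hK
  set C : ℝ := ((M:ℝ)+1) * (volume (Metric.ball (0:EuclideanSpace ℝ (Fin (M+1))) 1)).toReal with hC
  have h1 : ∫ x, ‖lap u x‖ ^ 2 =
      C * ∫ y in Set.Ioi (0:ℝ), y^M * ((K * Real.exp (-(β*y)))^2 * (β*y - ((M:ℝ)+1))^2) := by
    refine radial _ _ fun x hx => ?_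
    rw [norm_lap_sq α β hu' hx]
    push_cast
    ring
  have h2 : ∫ x, gradNormSq u x =
      C * ∫ y in Set.Ioi (0:ℝ), y^M * ((K * Real.exp (-(β*y)))^2 * y^2) := by
    refine radial _ _ fun x hx => ?_
    rw [gradNormSq_u_eq α β hu' hx]
  have h3 : ∫ x, gradNormSq u x / ‖x‖ =
      C * ∫ y in Set.Ioi (0:ℝ), y^M * ((K * Real.exp (-(β*y)))^2 * y) := by
    refine radial _ _ fun x hx => ?_
    rw [gradNormSq_u_eq α β hu' hx]
    have hnorm : (‖x‖ : ℝ) ≠ 0 := norm_ne_zero_iff.mpr hx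
    rw [sq ‖x‖, mul_div_assoc, mul_div_assoc, div_self hnorm, mul_one]
  rw [h1, h2, h3, int1 M K hβ, int2 M K hβ, int3 M K hβ]
  have hp2 : (1/(2*β))^(M+2) = (1/(2*β))^(M+1) * (1/(2*β)) := by
    rw [← pow_succ]
  have hp3 : (1/(2*β))^(M+3) = (1/(2*β))^(M+1) * (1/(2*β)) * (1/(2*β)) := by
    rw [← pow_succ, ← pow_succ]
  have hf2 : ((M+2).factorial : ℝ) = ((M:ℝ)+2) * ((M:ℝ)+1) * (M.factorial : ℝ) := by
    rw [Nat.factorial_succ, Nat.factorial_succ]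
    push_cast
    ring
  have hf1 : ((M+1).factorial : ℝ) = ((M:ℝ)+1) * (M.factorial : ℝ) := by
    rw [Nat.factorial_succ]
    push_cast
    ring
  rw [hp2, hp3, hf2, hf1]
  push_cast
  have hβ' : β ≠ 0 := hβ.ne'
  field_simp
  ring
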